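/- Let ν_{N,j} = (1/R²)[j(j+1) + (N/2)(2j+1)] with multiplicity m_{N,j} = N+2j+1 (the spectrum of the magnetic Laplacian on the round sphere of radius R with magnetic field F = (1/2)sinθ dθ∧dφ). Then Y_N(φ) = Σ_{j=0}^∞ (N+2j+1) φ(ν_{N,j}/N) admits an asymptotic expansion Y_N(φ) ∼ Σ_{l=0}^∞ f_l(φ) N^{1-l} as N→∞ for every Schwartz function φ, with leading coefficient f_0(φ) = Σ_{j=0}^∞ φ((2j+1)/(2R²)). -/

import Mathlib

open Real

/-- Smoothed spectral density for the magnetic Laplacian on the sphere of radius `R`: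
`Y_N(φ) = Σ_j (N+2j+1) φ((1/R²)[j(j+1)/N + (2j+1)/2])`. -/
noncomputable def Ysphere (R : ℝ) (φ : SchwartzMap ℝ ℂ) (N : ℕ) : ℂ :=
  ∑' j : ℕ, ((N : ℂ) + 2 * (j : ℂ) + 1) *
    φ ((1 / R ^ 2) * ((j : ℝ) * ((j : ℝ) + 1) / N + (2 * (j : ℝ) + 1) / 2))

lemma iterWithin_eq {f : ℝ → ℂ} (hf : ContDiff ℝ ((⊤:ℕ∞) : ℕ∞) f) {s : Set ℝ} (hs : UniqueDiffOn ℝ s)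
    {x : ℝ} (hx : x ∈ s) (n : ℕ) :
    iteratedDerivWithin n f s x = iteratedDeriv n f x := by
  rw [iteratedDerivWithin_eq_iteratedFDerivWithin, iteratedDeriv_eq_iteratedFDeriv]
  congr 1
  have H : HasFTaylorSeriesUpTo (⊤:ℕ∞) f (ftaylorSeries ℝ f) := contDiff_iff_ftaylorSeries.mp hf
  have h2 := (H.hasFTaylorSeriesUpToOn s).eq_iteratedFDerivWithin_of_uniqueDiffOn
    (m := n) (by exact_mod_cast le_top) hs hx
  rw [← h2]; rfl

-- Taylor bound
lemma taylor_bnd {f : ℝ → ℂ} (hf : ContDiff ℝ ((⊤:ℕ∞) : ℕ∞) f) (m : ℕ) {a b C x : ℝ}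
    (hab : a ≤ b) (hC0 : 0 ≤ C)
    (hC : ∀ t ∈ Set.Icc a b, ‖iteratedDeriv m f t‖ ≤ C)
    (hx : x ∈ Set.Icc a b) :
    ‖f x - ∑ k ∈ Finset.range m, ((x - a) ^ k / k.factorial : ℝ) • iteratedDeriv k f a‖
      ≤ C * (x - a) ^ m := by
  rcases m with _ | n
  · simpa using (hC x hx)
  rcases eq_or_lt_of_le hab with rfl | hlt
  · have hxa : x = a := le_antisymm hx.2 hx.1
    subst hxa
    have : ∑ k ∈ Finset.range (n + 1), ((x - x) ^ k / k.factorial : ℝ) • iteratedDeriv k f x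
        = f x := by
      rw [Finset.sum_eq_single 0]
      · simp
      · intro k _ hk
        rcases Nat.exists_eq_succ_of_ne_zero hk with ⟨i, rfl⟩
        simp [zero_pow]
      · simp
    rw [this]
    simp
  · have hud : UniqueDiffOn ℝ (Set.Icc a b) := uniqueDiffOn_Icc hlt
    have hfo : ContDiffOn ℝ (n + 1) f (Set.Icc a b) := (hf.of_le (by exact_mod_cast le_top)).contDiffOn
    have hC' : ∀ y ∈ Set.Icc a b,
        ‖iteratedDerivWithin (n + 1) f (Set.Icc a b) y‖ ≤ C := by
      intro y hy
      rw [iterWithin_eq hf hud hy]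
      exact hC y hy
    have hmem : a ∈ Set.Icc a b := Set.left_mem_Icc.2 hab
    have H := taylor_mean_remainder_bound hab hfo hx hC'
    rw [taylor_within_apply] at H
    have hco : ∀ k : ℕ, ((k.factorial : ℝ)⁻¹ * (x - a) ^ k) = ((x - a) ^ k / k.factorial : ℝ) :=
      fun k => by ring
    simp only [hco, iterWithin_eq hf hud hmem] at H
    refine H.trans ?_
    have h1 : (0:ℝ) ≤ (x - a) ^ (n + 1) := pow_nonneg (sub_nonneg.2 hx.1) _
    calc C * (x - a) ^ (n + 1) / n.factorial ≤ C * (x - a) ^ (n + 1) / 1 := by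
          apply div_le_div_of_nonneg_left (mul_nonneg hC0 h1) one_pos
          · exact_mod_cast n.factorial_pos
        _ = C * (x - a) ^ (n + 1) := by ring


noncomputable def aa (R : ℝ) (j : ℕ) : ℝ := (2 * (j : ℝ) + 1) / (2 * R ^ 2)
noncomputable def dd (R : ℝ) (j : ℕ) : ℝ := (j : ℝ) * ((j : ℝ) + 1) / R ^ 2

noncomputable def uu (R : ℝ) (φ : SchwartzMap ℝ ℂ) (k j : ℕ) : ℂ :=
  ((dd R j ^ k / k.factorial : ℝ) : ℂ) * iteratedDeriv k (⇑φ) (aa R j)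

noncomputable def ww (R : ℝ) (φ : SchwartzMap ℝ ℂ) (l j : ℕ) : ℂ :=
  uu R φ l j + if l = 0 then 0 else (2 * (j : ℂ) + 1) * uu R φ (l - 1) j

noncomputable def TT (R : ℝ) (φ : SchwartzMap ℝ ℂ) (N m j : ℕ) : ℂ :=
  ∑ k ∈ Finset.range m,
    ((dd R j / N) ^ k / k.factorial : ℝ) • iteratedDeriv k (⇑φ) (aa R j)

lemma schwartz_decay' (φ : SchwartzMap ℝ ℂ) (k q : ℕ) :
    ∃ C : ℝ, 0 ≤ C ∧ ∀ x : ℝ, 0 < x → ‖iteratedDeriv k (⇑φ) x‖ ≤ C / x ^ q := by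
  obtain ⟨C, hCpos, hC⟩ := φ.decay q k
  refine ⟨C, hCpos.le, ?_⟩
  intro x hx
  have h := hC x
  rw [norm_iteratedFDeriv_eq_norm_iteratedDeriv, Real.norm_eq_abs, abs_of_pos hx] at h
  rw [le_div_iff₀ (pow_pos hx q), mul_comm]
  exact h

lemma deriv_bnd (R : ℝ) (hR : 0 < R) (φ : SchwartzMap ℝ ℂ) (k q : ℕ) :
    ∃ C : ℝ, 0 ≤ C ∧ ∀ (j : ℕ) (t : ℝ), aa R j ≤ t →
      ‖iteratedDeriv k (⇑φ) t‖ ≤ C / ((j : ℝ) + 1) ^ q := by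
  obtain ⟨C, hC0, hC⟩ := schwartz_decay' φ k q
  refine ⟨C * (2 * R ^ 2) ^ q, by positivity, ?_⟩
  intro j t ht
  have h1 : ((j : ℝ) + 1) / (2 * R ^ 2) ≤ t := by
    refine le_trans ?_ ht
    unfold aa
    apply div_le_div_of_nonneg_right ?_ (by positivity)
    have : (0:ℝ) ≤ (j:ℝ) := Nat.cast_nonneg j
    linarith
  have ht0 : 0 < t := lt_of_lt_of_le (by positivity) h1
  refine (hC t ht0).trans ?_
  rw [div_le_div_iff₀ (pow_pos ht0 q) (by positivity)]
  have hj1 : ((j : ℝ) + 1) ≤ t * (2 * R ^ 2) := (div_le_iff₀ (by positivity)).1 h1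
  calc C * ((j:ℝ)+1) ^ q ≤ C * (t * (2 * R ^ 2)) ^ q := by
        apply mul_le_mul_of_nonneg_left (pow_le_pow_left₀ (by positivity) hj1 q) hC0
    _ = C * (2 * R ^ 2) ^ q * t ^ q := by rw [mul_pow]; ring

lemma sumInv2 : Summable (fun j : ℕ => (((j : ℝ) + 1) ^ 2)⁻¹) := by
  have h := Real.summable_one_div_nat_pow.mpr (le_refl 2)
  have h2 := (summable_nat_add_iff 1).mpr h
  refine h2.congr fun j => ?_
  push_cast
  rw [one_div]

lemma uu_bound (R : ℝ) (hR : 0 < R) (φ : SchwartzMap ℝ ℂ) (k : ℕ) :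
    ∃ C : ℝ, 0 ≤ C ∧ ∀ j : ℕ, ‖uu R φ k j‖ ≤ C / ((j : ℝ) + 1) ^ 3 := by
  obtain ⟨C, hC0, hC⟩ := deriv_bnd R hR φ k (2 * k + 3)
  refine ⟨C / R ^ (2 * k), by positivity, ?_⟩
  intro j
  set P : ℝ := (j : ℝ) + 1 with hP
  have hP1 : (1:ℝ) ≤ P := by simp [hP]
  have hP0 : (0:ℝ) < P := by linarith
  have hd0 : 0 ≤ dd R j := by unfold dd; positivity
  have hdle : dd R j ≤ P ^ 2 / R ^ 2 := by
    unfold dd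
    apply div_le_div_of_nonneg_right ?_ (by positivity)
    have h1 : (0:ℝ) ≤ (j:ℝ) := Nat.cast_nonneg j
    nlinarith
  have hD := hC j (aa R j) le_rfl
  rw [uu, norm_mul, Complex.norm_real, Real.norm_eq_abs,
    abs_of_nonneg (by positivity : (0:ℝ) ≤ dd R j ^ k / k.factorial)]
  calc dd R j ^ k / k.factorial * ‖iteratedDeriv k (⇑φ) (aa R j)‖
      ≤ dd R j ^ k * (C / P ^ (2*k+3)) := by
        apply mul_le_mul ?_ hD (norm_nonneg _) (by positivity)
        exact div_le_self (pow_nonneg hd0 k) (by exact_mod_cast k.factorial_pos)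
    _ ≤ (P ^ 2 / R ^ 2) ^ k * (C / P ^ (2*k+3)) := by
        apply mul_le_mul_of_nonneg_right (pow_le_pow_left₀ hd0 hdle k) (by positivity)
    _ = (C / R ^ (2*k)) / P ^ 3 := by
        rw [div_pow, ← pow_mul, ← pow_mul, pow_add]
        field_simp

lemma summable_of_bnd3 {g : ℕ → ℂ} {C : ℝ} (hC0 : 0 ≤ C)
    (h : ∀ j : ℕ, ‖g j‖ ≤ C / ((j : ℝ) + 1) ^ 3) : Summable g := by
  apply Summable.of_norm_bounded (sumInv2.mul_left C)
  intro j
  refine (h j).trans ?_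
  rw [div_eq_mul_inv]
  apply mul_le_mul_of_nonneg_left ?_ hC0
  have hP1 : (1:ℝ) ≤ (j:ℝ) + 1 := by simp
  apply inv_anti₀ (by positivity)
  calc ((j:ℝ)+1) ^ 2 ≤ ((j:ℝ)+1) ^ 3 := pow_le_pow_right₀ hP1 (by norm_num)

lemma summable_uu (R : ℝ) (hR : 0 < R) (φ : SchwartzMap ℝ ℂ) (k : ℕ) :
    Summable (uu R φ k) := by
  obtain ⟨C, hC0, hC⟩ := uu_bound R hR φ k
  exact summable_of_bnd3 hC0 hC

lemma norm_coef (j : ℕ) : ‖(2 * (j : ℂ) + 1)‖ = 2 * (j : ℝ) + 1 := by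
  have h : (2 * (j : ℂ) + 1) = ((2 * (j : ℝ) + 1 : ℝ) : ℂ) := by push_cast; ring
  rw [h, Complex.norm_real, Real.norm_eq_abs, abs_of_nonneg (by positivity)]

lemma summable_jmul_uu (R : ℝ) (hR : 0 < R) (φ : SchwartzMap ℝ ℂ) (k : ℕ) :
    Summable (fun j : ℕ => (2 * (j : ℂ) + 1) * uu R φ k j) := by
  obtain ⟨C, hC0, hC⟩ := uu_bound R hR φ k
  apply Summable.of_norm_bounded
    (sumInv2.mul_left (2 * C))
  intro j
  set P : ℝ := (j : ℝ) + 1 with hP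
  have hP1 : (1:ℝ) ≤ P := by simp [hP]
  have hP0 : (0:ℝ) < P := by linarith
  rw [norm_mul, norm_coef]
  calc (2 * (j:ℝ) + 1) * ‖uu R φ k j‖ ≤ (2 * P) * (C / P ^ 3) := by
        apply mul_le_mul (by simp [hP]; linarith) (hC j) (norm_nonneg _) (by positivity)
    _ = (2 * C) * (P ^ 2)⁻¹ := by field_simp

lemma summable_ww (R : ℝ) (hR : 0 < R) (φ : SchwartzMap ℝ ℂ) (l : ℕ) :
    Summable (ww R φ l) := by
  rcases l with _ | l
  · rw [show ww R φ 0 = uu R φ 0 from funext fun j => by simp [ww]]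
    exact summable_uu R hR φ 0
  · have h : ww R φ (l+1) = fun j => uu R φ (l+1) j + (2 * (j : ℂ) + 1) * uu R φ l j := by
      funext j; simp [ww]
    rw [h]
    exact (summable_uu R hR φ (l+1)).add (summable_jmul_uu R hR φ l)

lemma uu_pow (R : ℝ) (φ : SchwartzMap ℝ ℂ) (N : ℕ) (hN : 1 ≤ N) (k j : ℕ) :
    uu R φ k j * ((N:ℂ)⁻¹) ^ k
      = (((dd R j / N) ^ k / k.factorial : ℝ) : ℂ) * iteratedDeriv k (⇑φ) (aa R j) := by
  have hN0 : ((N:ℂ)) ≠ 0 := Nat.cast_ne_zero.mpr (by omega)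
  have hk : ((k.factorial : ℂ)) ≠ 0 := by exact_mod_cast k.factorial_ne_zero
  rw [uu, div_pow]
  push_cast
  field_simp
  rw [mul_assoc, ← mul_pow, one_div, inv_mul_cancel₀ hN0, one_pow, mul_one]

lemma TT_succ (R : ℝ) (φ : SchwartzMap ℝ ℂ) (N m j : ℕ) :
    TT R φ N (m+1) j = TT R φ N m j
      + ((dd R j / N) ^ m / m.factorial : ℝ) • iteratedDeriv m (⇑φ) (aa R j) :=
  Finset.sum_range_succ _ m

lemma key_ident (R : ℝ) (φ : SchwartzMap ℝ ℂ) (N : ℕ) (hN : 1 ≤ N) (M j : ℕ) :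
    ∑ l ∈ Finset.range (M+1), ww R φ l j * ((N:ℂ) * ((N:ℂ)⁻¹) ^ l)
      = (N:ℂ) * TT R φ N (M+1) j + (2 * (j:ℂ) + 1) * TT R φ N M j := by
  have hN0 : ((N:ℂ)) ≠ 0 := Nat.cast_ne_zero.mpr (by omega)
  induction M with
  | zero =>
    rw [Finset.sum_range_one, TT_succ]
    simp [ww, uu, TT, Complex.real_smul]
    ring
  | succ M ih =>
    rw [Finset.sum_range_succ, ih, TT_succ R φ N (M+1) j, TT_succ R φ N M j]
    have hw : ww R φ (M+1) j = uu R φ (M+1) j + (2 * (j:ℂ) + 1) * uu R φ M j := by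
      simp [ww]
    rw [hw]
    simp only [Complex.real_smul]
    rw [← uu_pow R φ N hN (M+1) j, ← uu_pow R φ N hN M j]
    have hNN : (N:ℂ) * ((N:ℂ)⁻¹) ^ (M+1) = ((N:ℂ)⁻¹) ^ M := by
      rw [pow_succ]
      field_simp
    linear_combination (2 * (j:ℂ) + 1) * uu R φ M j * hNN

lemma remainder_bnd (R : ℝ) (hR : 0 < R) (φ : SchwartzMap ℝ ℂ) (m q : ℕ) {Cq : ℝ}
    (hC0 : 0 ≤ Cq)
    (hC : ∀ (j : ℕ) (t : ℝ), aa R j ≤ t → ‖iteratedDeriv m (⇑φ) t‖ ≤ Cq / ((j:ℝ)+1) ^ q)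
    (N : ℕ) (hN : 1 ≤ N) (j : ℕ) :
    ‖(⇑φ) (aa R j + dd R j / N) - TT R φ N m j‖
      ≤ (Cq / ((j:ℝ)+1) ^ q) * (dd R j / N) ^ m := by
  have hsm : ContDiff ℝ ((⊤:ℕ∞) : ℕ∞) (⇑φ) := φ.smooth ⊤
  have hd0 : 0 ≤ dd R j := by unfold dd; positivity
  have hN1 : (1:ℝ) ≤ (N:ℝ) := by exact_mod_cast hN
  have hh0 : 0 ≤ dd R j / N := by positivity
  have hhle : dd R j / N ≤ dd R j := div_le_self hd0 hN1
  have hx : aa R j + dd R j / N ∈ Set.Icc (aa R j) (aa R j + dd R j) :=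
    ⟨by linarith, by linarith⟩
  have hab : aa R j ≤ aa R j + dd R j := by linarith
  have hCt : ∀ t ∈ Set.Icc (aa R j) (aa R j + dd R j),
      ‖iteratedDeriv m (⇑φ) t‖ ≤ Cq / ((j:ℝ)+1) ^ q := fun t ht => hC j t ht.1
  have H := taylor_bnd hsm m hab (by positivity) hCt hx
  rw [add_sub_cancel_left] at H
  unfold TT
  exact H


/-- `Y_N(φ)` admits an asymptotic expansion `Σ_l f_l(φ) N^{1-l}` with
leading coefficient `f_0(φ) = Σ_j φ((2j+1)/(2R²))`. -/
theorem stmt8 (R : ℝ) (hR : 0 < R) (φ : SchwartzMap ℝ ℂ) :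
    ∃ f : ℕ → ℂ,
      f 0 = ∑' j : ℕ, φ ((2 * (j : ℝ) + 1) / (2 * R ^ 2)) ∧
      ∀ M : ℕ, ∃ C : ℝ, ∀ N : ℕ, 1 ≤ N →
        ‖Ysphere R φ N -
            ∑ l ∈ Finset.range (M + 1), f l * (((N : ℝ) ^ ((1 : ℝ) - (l : ℝ)) : ℝ) : ℂ)‖ ≤
          C * (N : ℝ) ^ (-(M : ℝ)) := by
  classical
  have hR2 : (0:ℝ) < R ^ 2 := by positivity
  refine ⟨fun l => ∑' j, ww R φ l j, ?_, ?_⟩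
  · exact tsum_congr fun j => by simp [ww, uu, aa]
  intro M
  obtain ⟨C1, hC10, hC1⟩ := deriv_bnd R hR φ (M+1) (2*M+4)
  obtain ⟨C2, hC20, hC2⟩ := deriv_bnd R hR φ M (2*M+4)
  set K : ℝ := C1 / (R^2)^(M+1) + 2 * C2 / (R^2)^M with hK
  have hK0 : 0 ≤ K := by positivity
  set S : ℝ := ∑' j : ℕ, (((j:ℝ)+1)^2)⁻¹ with hS
  have hS0 : 0 ≤ S := tsum_nonneg fun j => by positivity
  refine ⟨K * S, ?_⟩
  intro N hN
  have hNR : (0:ℝ) < (N:ℝ) := by exact_mod_cast hN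
  have hNC : ((N:ℂ)) ≠ 0 := Nat.cast_ne_zero.mpr (by omega)
  have hNP : ∀ l : ℕ, (((N : ℝ) ^ ((1:ℝ) - (l:ℝ)) : ℝ) : ℂ) = (N:ℂ) * ((N:ℂ)⁻¹) ^ l := by
    intro l
    rw [Real.rpow_sub hNR, Real.rpow_one, Real.rpow_natCast]
    push_cast
    rw [div_eq_mul_inv, inv_pow]
  set A : ℕ → ℂ := fun j => ((N : ℂ) + 2 * (j : ℂ) + 1) *
    φ ((1 / R ^ 2) * ((j : ℝ) * ((j : ℝ) + 1) / N + (2 * (j : ℝ) + 1) / 2)) with hA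
  set Bf : ℕ → ℂ := fun j => ∑ l ∈ Finset.range (M+1), ww R φ l j * ((N:ℂ) * ((N:ℂ)⁻¹) ^ l) with hBf
  have harg : ∀ j : ℕ, (1 / R ^ 2) * ((j : ℝ) * ((j : ℝ) + 1) / N + (2 * (j : ℝ) + 1) / 2)
      = aa R j + dd R j / N := by
    intro j; unfold aa dd; field_simp; ring
  -- per-j bound
  have hEbound : ∀ j : ℕ, ‖A j - Bf j‖ ≤ (K * ((N:ℝ)^M)⁻¹) * (((j:ℝ)+1)^2)⁻¹ := by
    intro j
    set P : ℝ := (j:ℝ) + 1 with hP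
    have hP1 : (1:ℝ) ≤ P := by simp [hP]
    have hP0 : (0:ℝ) < P := by linarith
    have hd0 : 0 ≤ dd R j := by unfold dd; positivity
    have hdle : dd R j ≤ P ^ 2 / R ^ 2 := by
      unfold dd
      apply div_le_div_of_nonneg_right ?_ (by positivity)
      have h1 : (0:ℝ) ≤ (j:ℝ) := Nat.cast_nonneg j
      nlinarith
    have hhle2 : dd R j / N ≤ P ^ 2 / (R ^ 2 * N) := by
      rw [← div_div]
      exact div_le_div_of_nonneg_right hdle hNR.le
    have hh0 : 0 ≤ dd R j / N := by positivity
    have hEj : A j - Bf j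
        = (N:ℂ) * ((⇑φ) (aa R j + dd R j / N) - TT R φ N (M+1) j)
          + (2 * (j:ℂ) + 1) * ((⇑φ) (aa R j + dd R j / N) - TT R φ N M j) := by
      simp only [hA, hBf, harg j]
      rw [key_ident R φ N hN M j]
      ring
    rw [hEj]
    have h1 := remainder_bnd R hR φ (M+1) (2*M+4) hC10 hC1 N hN j
    have h2 := remainder_bnd R hR φ M (2*M+4) hC20 hC2 N hN j
    have e1 : (N:ℝ) * (C1 / P ^ (2*M+4) * (P ^ 2 / (R ^ 2 * N)) ^ (M+1))
        = (C1 / (R^2)^(M+1)) * (P^2)⁻¹ * ((N:ℝ)^M)⁻¹ := by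
      rw [div_pow, mul_pow, show P ^ (2*M+4) = (P^2)^(M+2) by rw [show 2*M+4 = 2*(M+2) by ring, pow_mul]]
      field_simp
      ring
    have e2 : (2*P) * (C2 / P ^ (2*M+4) * (P ^ 2 / (R ^ 2 * N)) ^ M)
        = ((2 * C2 / (R^2)^M) * (P^2)⁻¹ * ((N:ℝ)^M)⁻¹) * P⁻¹ := by
      rw [div_pow, mul_pow, show P ^ (2*M+4) = (P^2)^(M+2) by rw [show 2*M+4 = 2*(M+2) by ring, pow_mul]]
      field_simp
      ring
    calc ‖(N:ℂ) * ((⇑φ) (aa R j + dd R j / N) - TT R φ N (M+1) j)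
          + (2 * (j:ℂ) + 1) * ((⇑φ) (aa R j + dd R j / N) - TT R φ N M j)‖
        ≤ ‖(N:ℂ)‖ * ‖(⇑φ) (aa R j + dd R j / N) - TT R φ N (M+1) j‖
          + ‖(2 * (j:ℂ) + 1)‖ * ‖(⇑φ) (aa R j + dd R j / N) - TT R φ N M j‖ := by
          refine (norm_add_le _ _).trans ?_
          rw [norm_mul, norm_mul]
      _ ≤ (N:ℝ) * (C1 / P ^ (2*M+4) * (P ^ 2 / (R ^ 2 * N)) ^ (M+1))
          + (2*P) * (C2 / P ^ (2*M+4) * (P ^ 2 / (R ^ 2 * N)) ^ M) := by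
          have hn1 : ‖(N:ℂ)‖ = (N:ℝ) := by
            rw [show ((N:ℂ)) = (((N:ℝ):ℝ) : ℂ) by push_cast; rfl, Complex.norm_real,
              Real.norm_eq_abs, abs_of_pos hNR]
          have hn2 : ‖(2 * (j:ℂ) + 1)‖ ≤ 2 * P := by
            rw [norm_coef]; simp [hP]; linarith
          apply add_le_add
          · rw [hn1]
            apply mul_le_mul_of_nonneg_left ?_ hNR.le
            refine h1.trans ?_
            exact mul_le_mul_of_nonneg_left (pow_le_pow_left₀ hh0 hhle2 _) (by positivity)
          · apply mul_le_mul hn2 ?_ (norm_nonneg _) (by positivity)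
            refine h2.trans ?_
            exact mul_le_mul_of_nonneg_left (pow_le_pow_left₀ hh0 hhle2 _) (by positivity)
      _ ≤ (C1 / (R^2)^(M+1)) * (P^2)⁻¹ * ((N:ℝ)^M)⁻¹
          + (2 * C2 / (R^2)^M) * (P^2)⁻¹ * ((N:ℝ)^M)⁻¹ := by
          rw [e1, e2]
          refine add_le_add (le_refl _) ?_
          have hPinv : P⁻¹ ≤ 1 := inv_le_one_of_one_le₀ hP1
          calc ((2 * C2 / (R^2)^M) * (P^2)⁻¹ * ((N:ℝ)^M)⁻¹) * P⁻¹
              ≤ ((2 * C2 / (R^2)^M) * (P^2)⁻¹ * ((N:ℝ)^M)⁻¹) * 1 :=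
                mul_le_mul_of_nonneg_left hPinv (by positivity)
            _ = (2 * C2 / (R^2)^M) * (P^2)⁻¹ * ((N:ℝ)^M)⁻¹ := mul_one _
      _ = (K * ((N:ℝ)^M)⁻¹) * (P^2)⁻¹ := by rw [hK]; ring
  -- summabilities
  have hwsum : ∀ l ∈ Finset.range (M+1), Summable (fun j => ww R φ l j * ((N:ℂ) * ((N:ℂ)⁻¹) ^ l)) :=
    fun l _ => (summable_ww R hR φ l).mul_right _
  have hBsum : Summable Bf := summable_sum hwsum
  have hgs : Summable (fun j : ℕ => (K * ((N:ℝ)^M)⁻¹) * (((j:ℝ)+1)^2)⁻¹) :=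
    sumInv2.mul_left _
  have hEs : Summable (fun j => A j - Bf j) :=
    Summable.of_norm_bounded hgs hEbound
  have hAs : Summable A := by
    have hrw : A = fun j => (A j - Bf j) + Bf j := funext fun j => by ring
    rw [hrw]
    exact hEs.add hBsum
  have hEn : Summable (fun j => ‖A j - Bf j‖) :=
    Summable.of_nonneg_of_le (fun j => norm_nonneg _) hEbound hgs
  -- rewrite goal
  have hgoal1 : Ysphere R φ N = ∑' j, A j := by rw [hA]; rfl
  have hsum_f : ∑ l ∈ Finset.range (M+1),
      (∑' j, ww R φ l j) * (((N : ℝ) ^ ((1:ℝ) - (l:ℝ)) : ℝ) : ℂ) = ∑' j, Bf j := by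
    calc ∑ l ∈ Finset.range (M+1), (∑' j, ww R φ l j) * (((N : ℝ) ^ ((1:ℝ) - (l:ℝ)) : ℝ) : ℂ)
        = ∑ l ∈ Finset.range (M+1), (∑' j, ww R φ l j) * ((N:ℂ) * ((N:ℂ)⁻¹) ^ l) :=
          Finset.sum_congr rfl fun l _ => by rw [hNP l]
      _ = ∑ l ∈ Finset.range (M+1), ∑' j, ww R φ l j * ((N:ℂ) * ((N:ℂ)⁻¹) ^ l) :=
          Finset.sum_congr rfl fun l _ => (tsum_mul_right).symm
      _ = ∑' j, ∑ l ∈ Finset.range (M+1), ww R φ l j * ((N:ℂ) * ((N:ℂ)⁻¹) ^ l) :=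
          (Summable.tsum_finsetSum hwsum).symm
      _ = ∑' j, Bf j := by rw [hBf]
  rw [hgoal1, hsum_f, ← Summable.tsum_sub hAs hBsum]
  calc ‖∑' j, (A j - Bf j)‖ ≤ ∑' j, ‖A j - Bf j‖ := norm_tsum_le_tsum_norm hEn
    _ ≤ ∑' j : ℕ, (K * ((N:ℝ)^M)⁻¹) * (((j:ℝ)+1)^2)⁻¹ := Summable.tsum_le_tsum hEbound hEn hgs
    _ = (K * ((N:ℝ)^M)⁻¹) * S := by rw [hS]; exact tsum_mul_left
    _ = K * S * (N:ℝ) ^ (-(M:ℝ)) := by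
        rw [Real.rpow_neg hNR.le, Real.rpow_natCast]
        ring
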